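/- Let G be a group and I a type. Let Λ : G →* Equiv.Perm (I × G) send a ∈ G to the permutation (i, g) ↦ (i, a * g). Then the centralizer of Λ.range in Equiv.Perm (I × G) is isomorphic, as a group, to the semidirect product (I → G) ⋊ Equiv.Perm I, where Equiv.Perm I acts on the product group I → G by permuting coordinates (τ acts by h ↦ h ∘ τ⁻¹); this semidirect product is the unrestricted wreath product G ≀ S_I. -/

import Mathlib

/-- The action of `Equiv.Perm I` on the (unrestricted) product group `I → G` by permuting
coordinates: `τ` acts by `h ↦ h ∘ τ⁻¹`. -/
def permuteCoords (I G : Type*) [Group G] : Equiv.Perm I →* MulAut (I → G) where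
  toFun τ :=
    { toFun := fun h => h ∘ ⇑τ⁻¹
      invFun := fun h => h ∘ ⇑τ
      left_inv := fun h => funext fun i => by simp
      right_inv := fun h => funext fun i => by simp
      map_mul' := fun h₁ h₂ => rfl }
  map_one' := rfl
  map_mul' := fun τ₁ τ₂ => rfl

/-- Auxiliary: the permutation of `I × G` attached to an element of the wreath product. -/
def wreathPerm {G : Type*} [Group G] {I : Type*}
    (x : SemidirectProduct (I → G) (Equiv.Perm I) (permuteCoords I G)) :
    Equiv.Perm (I × G) where
  toFun p := (x.right p.1, p.2 * (x.left (x.right p.1))⁻¹)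
  invFun p := (x.right⁻¹ p.1, p.2 * x.left p.1)
  left_inv p := by simp
  right_inv p := by simp

/-- Auxiliary: `wreathPerm` as a monoid hom. -/
def wreathHom (G : Type*) [Group G] (I : Type*) :
    SemidirectProduct (I → G) (Equiv.Perm I) (permuteCoords I G) →* Equiv.Perm (I × G) where
  toFun := wreathPerm
  map_one' := Equiv.ext fun p => by simp [wreathPerm]
  map_mul' x y := Equiv.ext fun p => by
    simp [wreathPerm, mul_assoc, mul_inv_rev, SemidirectProduct.mul_left,
      SemidirectProduct.mul_right]
    simp [permuteCoords]

theorem stmt_12 {G : Type*} [Group G] {I : Type*}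
    (Λ : G →* Equiv.Perm (I × G))
    (hΛ : ∀ (a : G) (x : I × G), Λ a x = (x.1, a * x.2)) :
    Nonempty
      (↥(Subgroup.centralizer (Λ.range : Set (Equiv.Perm (I × G)))) ≃*
        SemidirectProduct (I → G) (Equiv.Perm I) (permuteCoords I G)) := by
  classical
  set C := Subgroup.centralizer (Λ.range : Set (Equiv.Perm (I × G))) with hC
  -- key: centralizer elements have the form (i,g) ↦ (τ i, g * f i)
  have key : ∀ σ ∈ C, ∀ (i : I) (g : G),
      σ (i, g) = ((σ (i, 1)).1, g * (σ (i, 1)).2) := by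
    intro σ hσ i g
    have h1 := (Subgroup.mem_centralizer_iff.mp hσ) (Λ g) ⟨g, rfl⟩
    have h2 : (Λ g * σ) (i, 1) = (σ * Λ g) (i, 1) := by rw [h1]
    simpa [Equiv.Perm.mul_apply, hΛ] using h2.symm
  -- the map lands in the centralizer
  have mem : ∀ x, wreathPerm x ∈ C := by
    intro x
    rw [hC, Subgroup.mem_centralizer_iff]
    rintro - ⟨a, rfl⟩
    ext p
    · simp [Equiv.Perm.mul_apply, hΛ, wreathPerm]
    · simp [Equiv.Perm.mul_apply, hΛ, wreathPerm, mul_assoc]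
  let Φ : SemidirectProduct (I → G) (Equiv.Perm I) (permuteCoords I G) →* C :=
    (wreathHom G I).codRestrict C mem
  have hinj : Function.Injective Φ := by
    rw [injective_iff_map_eq_one]
    intro x hx
    have hx' : wreathPerm x = 1 := congrArg Subtype.val hx
    have h1 : ∀ i : I, x.right i = i ∧ (x.left (x.right i))⁻¹ = 1 := by
      intro i
      have := (Equiv.ext_iff.mp hx') (i, (1 : G))
      simpa [wreathPerm, Prod.ext_iff] using this
    ext i
    · have h := (h1 i)
      have := h.2
      rw [h.1] at this
      simpa using inv_eq_one.mp this
    · exact (h1 i).1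
  have hsurj : Function.Surjective Φ := by
    rintro ⟨σ, hσ⟩
    have hσ' : σ⁻¹ ∈ C := C.inv_mem hσ
    -- first components give a permutation of I
    have hli : ∀ i : I, (σ⁻¹ ((σ (i, 1)).1, 1)).1 = i := by
      intro i
      have h1 := key σ⁻¹ hσ' (σ (i, 1)).1 (σ (i, 1)).2
      have h2 : σ⁻¹ (σ (i, 1)) = (i, 1) := Equiv.symm_apply_apply σ _
      have h3 : σ⁻¹ ((σ (i, 1)).1, (σ (i, 1)).2) = (i, 1) := by
        simp [h2]
      rw [h1] at h3
      exact (congrArg Prod.fst h3)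
    have hri : ∀ i : I, (σ ((σ⁻¹ (i, 1)).1, 1)).1 = i := by
      intro i
      have h1 := key σ hσ (σ⁻¹ (i, 1)).1 (σ⁻¹ (i, 1)).2
      have h2 : σ (σ⁻¹ (i, 1)) = (i, 1) := Equiv.apply_symm_apply σ _
      have h3 : σ ((σ⁻¹ (i, 1)).1, (σ⁻¹ (i, 1)).2) = (i, 1) := by
        simp [h2]
      rw [h1] at h3
      exact (congrArg Prod.fst h3)
    let τ : Equiv.Perm I :=
      { toFun := fun i => (σ (i, 1)).1
        invFun := fun i => (σ⁻¹ (i, 1)).1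
        left_inv := hli
        right_inv := hri }
    let h : I → G := fun i => ((σ (τ.symm i, 1)).2)⁻¹
    refine ⟨⟨h, τ⟩, ?_⟩
    apply Subtype.ext
    show wreathPerm ⟨h, τ⟩ = σ
    ext p
    · show τ p.1 = (σ p).1
      have := key σ hσ p.1 p.2
      rw [this]
      rfl
    · show p.2 * (h (τ p.1))⁻¹ = (σ p).2
      have hk := key σ hσ p.1 p.2
      have : h (τ p.1) = ((σ (p.1, 1)).2)⁻¹ := by
        show ((σ (τ.symm (τ p.1), 1)).2)⁻¹ = _
        rw [Equiv.symm_apply_apply]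
      rw [this, inv_inv, hk]
  exact ⟨(MulEquiv.ofBijective Φ ⟨hinj, hsurj⟩).symm⟩
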